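/- For every t > 0 and every x ∈ X one has D⁺_t(x)/t ≤ |∂⁻ f_t|(x) + tilt(f)(x). -/

import Mathlib

/-!
Setting: `(X, d)` is a complete length metric space, `f : X × X → ℝ` is lower
semicontinuous, bounded from below, and satisfies the reverse triangle inequality
`f(x,z) ≥ f(x,y) + f(y,z)`.  For `t > 0` set `F(t,x;y) := f(x,y) + d(x,y)²/(2t)`,
`f_t(x) := inf_y F(t,x;y)`, and `f_0(x) := f(x,x)`.  `D⁺_t(x)` (resp. `D⁻_t(x)`)
is the largest (resp. smallest) value of `limsup_n d(x,y_n)` (resp. `liminf_n d(x,y_n)`)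
among minimizing sequences `(y_n)` of `F(t,x;·)`.
-/

open Filter Topology Metric MeasureTheory
open scoped ENNReal NNReal

noncomputable section

/-- A metric space is a *length space* if the distance between any two points equals the
infimum of the lengths (total variations) of continuous curves joining them. -/
def IsLengthSpace (X : Type*) [MetricSpace X] : Prop :=
  ∀ x y : X,
    ENNReal.ofReal (dist x y) =
      ⨅ γ : { γ : ℝ → X // ContinuousOn γ (Set.Icc 0 1) ∧ γ 0 = x ∧ γ 1 = y },
        eVariationOn γ.1 (Set.Icc 0 1)

variable {X : Type*} [MetricSpace X]

/-- `FH f t x y = f(x,y) + d(x,y)² / (2t)`. -/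
def FH (f : X × X → ℝ) (t : ℝ) (x y : X) : ℝ :=
  f (x, y) + dist x y ^ 2 / (2 * t)

/-- `ft f t x = inf_y (f(x,y) + d(x,y)²/(2t))` for `t ≠ 0`, and `ft f 0 x = f(x,x)`. -/
def ft (f : X × X → ℝ) (t : ℝ) (x : X) : ℝ :=
  if t = 0 then f (x, x) else ⨅ y : X, FH f t x y

/-- `y : ℕ → X` is a minimizing sequence for `F(t,x;·)`. -/
def MinSeq (f : X × X → ℝ) (t : ℝ) (x : X) (y : ℕ → X) : Prop :=
  Tendsto (fun n => FH f t x (y n)) atTop (𝓝 (ft f t x))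

/-- `D⁺_t(x)`: the largest value of `limsup_n d(x, y_n)` among minimizing sequences. -/
def Dplus (f : X × X → ℝ) (t : ℝ) (x : X) : ℝ :=
  sSup { L : ℝ | ∃ y : ℕ → X, MinSeq f t x y ∧
    Filter.limsup (fun n => dist x (y n)) atTop = L }

/-- `D⁻_t(x)`: the smallest value of `liminf_n d(x, y_n)` among minimizing sequences. -/
def Dminus (f : X × X → ℝ) (t : ℝ) (x : X) : ℝ :=
  sInf { L : ℝ | ∃ y : ℕ → X, MinSeq f t x y ∧
    Filter.liminf (fun n => dist x (y n)) atTop = L }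

/-- Descending slope `|∂⁻ g|(x) = limsup_{y→x} (g(y) - g(x))⁻ / d(x,y)`, valued in `[0,∞]`. -/
def descSlope (g : X → ℝ) (x : X) : ℝ≥0∞ :=
  Filter.limsup (fun y => ENNReal.ofReal ((g x - g y) / dist x y)) (𝓝[≠] x)

/-- The tilt `tilt(f)(x) = limsup_{y→x} (f(x,y))⁻ / d(x,y)`, valued in `[0,∞]`. -/
def tilt (f : X × X → ℝ) (x : X) : ℝ≥0∞ :=
  Filter.limsup (fun y => ENNReal.ofReal ((-f (x, y)) / dist x y)) (𝓝[≠] x)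

section Aux

/-- Subadditivity of `limsup` in `ℝ≥0∞`. -/
lemma my_limsup_add_le {ι : Type*} {l : Filter ι} (u v : ι → ℝ≥0∞) :
    Filter.limsup (fun i => u i + v i) l ≤ Filter.limsup u l + Filter.limsup v l := by
  set a := Filter.limsup u l with ha
  set b := Filter.limsup v l with hb
  rcases eq_or_ne a ⊤ with h | h
  · simp [h]
  rcases eq_or_ne b ⊤ with h' | h'
  · simp [h']
  apply ENNReal.le_of_forall_pos_le_add
  intro ε hε _
  have hε2 : ((ε : ℝ≥0∞) / 2) ≠ 0 := by
    simp [ENNReal.div_eq_top, hε.ne']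
  have h1 : ∀ᶠ i in l, u i < a + ε / 2 :=
    Filter.eventually_lt_of_limsup_lt (ENNReal.lt_add_right h hε2)
  have h2 : ∀ᶠ i in l, v i < b + ε / 2 :=
    Filter.eventually_lt_of_limsup_lt (ENNReal.lt_add_right h' hε2)
  have hev : ∀ᶠ i in l, u i + v i ≤ a + b + ε := by
    filter_upwards [h1, h2] with i hi1 hi2
    calc u i + v i ≤ (a + ε / 2) + (b + ε / 2) := add_le_add hi1.le hi2.le
      _ = a + b + (ε / 2 + ε / 2) := by ring
      _ = a + b + ε := by rw [ENNReal.add_halves]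
  exact Filter.limsup_le_of_le (by isBoundedDefault) hev

/-- limsup along a sequence tending to a filter is at most the limsup along the filter. -/
lemma my_limsup_comp_le {α : Type*} {g : α → ℝ≥0∞} {z : ℕ → α} {F : Filter α}
    (h : Filter.Tendsto z Filter.atTop F) :
    Filter.limsup (fun k => g (z k)) Filter.atTop ≤ Filter.limsup g F := by
  rw [Filter.limsup, Filter.limsup]
  refine Filter.limsSup_le_limsSup_of_le ?_
  rw [show (fun k => g (z k)) = g ∘ z from rfl, ← Filter.map_map]
  exact Filter.map_mono h

/-- In a length space, one can find a point at distance exactly `δ` from `x` which is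
almost on a geodesic from `x` to `y`. -/
lemma my_exists_point (hX : IsLengthSpace X) (x y : X) {δ ε : ℝ} (hδ0 : 0 ≤ δ)
    (hδd : δ ≤ dist x y) (hε : 0 < ε) :
    ∃ z : X, dist x z = δ ∧ dist z y ≤ dist x y - δ + ε := by
  have hinf := hX x y
  have hlt : (⨅ γ : { γ : ℝ → X // ContinuousOn γ (Set.Icc 0 1) ∧ γ 0 = x ∧ γ 1 = y },
      eVariationOn γ.1 (Set.Icc 0 1)) < ENNReal.ofReal (dist x y) + ENNReal.ofReal ε := by
    rw [← hinf]
    exact ENNReal.lt_add_right ENNReal.ofReal_ne_top (ENNReal.ofReal_pos.2 hε).ne'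
  obtain ⟨⟨γ, hγc, hγ0, hγ1⟩, hγvar⟩ := iInf_lt_iff.mp hlt
  have hcont : ContinuousOn (fun s => dist x (γ s)) (Set.Icc 0 1) :=
    (continuous_const.dist continuous_id).comp_continuousOn hγc
  have hmem : δ ∈ Set.Icc (dist x (γ 0)) (dist x (γ 1)) := by
    rw [hγ0, hγ1, dist_self]; exact ⟨hδ0, hδd⟩
  obtain ⟨s, hs, hsd⟩ := intermediate_value_Icc (by norm_num : (0:ℝ) ≤ 1) hcont hmem
  refine ⟨γ s, hsd, ?_⟩
  have hsplit := eVariationOn.Icc_add_Icc γ (a := 0) (b := s) (c := 1) hs.1 hs.2 hs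
  have i1 : Set.Icc (0:ℝ) 1 ∩ Set.Icc 0 s = Set.Icc 0 s :=
    Set.inter_eq_self_of_subset_right (Set.Icc_subset_Icc_right hs.2)
  have i2 : Set.Icc (0:ℝ) 1 ∩ Set.Icc s 1 = Set.Icc s 1 :=
    Set.inter_eq_self_of_subset_right (Set.Icc_subset_Icc_left hs.1)
  rw [i1, i2, Set.inter_self] at hsplit
  have e1 : edist x (γ s) ≤ eVariationOn γ (Set.Icc 0 s) := by
    conv_lhs => rw [← hγ0]
    exact eVariationOn.edist_le γ ⟨le_refl 0, hs.1⟩ ⟨hs.1, le_refl s⟩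
  have e2 : edist (γ s) y ≤ eVariationOn γ (Set.Icc s 1) := by
    conv_lhs => rw [← hγ1]
    exact eVariationOn.edist_le γ ⟨le_refl s, hs.2⟩ ⟨hs.2, le_refl 1⟩
  have htot : edist x (γ s) + edist (γ s) y ≤ ENNReal.ofReal (dist x y + ε) := by
    calc edist x (γ s) + edist (γ s) y
        ≤ eVariationOn γ (Set.Icc 0 s) + eVariationOn γ (Set.Icc s 1) := add_le_add e1 e2
      _ = eVariationOn γ (Set.Icc 0 1) := hsplit
      _ ≤ ENNReal.ofReal (dist x y) + ENNReal.ofReal ε := hγvar.le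
      _ = ENNReal.ofReal (dist x y + ε) := (ENNReal.ofReal_add dist_nonneg hε.le).symm
  rw [edist_dist, edist_dist, ← ENNReal.ofReal_add dist_nonneg dist_nonneg] at htot
  have hre := (ENNReal.ofReal_le_ofReal_iff (by positivity)).mp htot
  linarith [hsd, hre]

/-- The key estimate: for any minimizing sequence, the limsup of distances (divided by `t`)
is bounded by the slope plus the tilt. -/
lemma my_key (hX : IsLengthSpace X)
    (f : X × X → ℝ)
    (hbdd : ∃ C : ℝ, ∀ p : X × X, C ≤ f p)
    (hrev : ∀ x y z : X, f (x, y) + f (y, z) ≤ f (x, z))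
    (t : ℝ) (ht : 0 < t) (x : X) {L : ℝ} (y : ℕ → X) (hmin : MinSeq f t x y)
    (hL : Filter.limsup (fun n => dist x (y n)) atTop = L) :
    ENNReal.ofReal (L / t) ≤ descSlope (fun z => ft f t z) x + tilt f x := by
  classical
  obtain ⟨C, hC⟩ := hbdd
  have hFHlb : ∀ w : X, BddBelow (Set.range (FH f t w)) := by
    intro w
    refine ⟨C, ?_⟩
    rintro _ ⟨z, rfl⟩
    exact le_trans (hC (w, z)) (le_add_of_nonneg_right (by positivity))
  have hft : ∀ w : X, ft f t w = ⨅ z, FH f t w z := fun w => if_neg ht.ne'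
  have hle : ∀ w z : X, ft f t w ≤ FH f t w z := fun w z => (hft w) ▸ ciInf_le (hFHlb w) z
  rcases le_or_gt L 0 with hL0 | hL0
  · rw [ENNReal.ofReal_of_nonpos (div_nonpos_of_nonpos_of_nonneg hL0 ht.le)]
    exact zero_le
  -- the error of the minimizing sequence
  set e : ℕ → ℝ := fun n => FH f t x (y n) - ft f t x with he
  have he0 : ∀ n, 0 ≤ e n := fun n => sub_nonneg.2 (hle x (y n))
  have heto : Tendsto e atTop (𝓝 0) := by
    have := hmin.sub_const (ft f t x)
    simpa using this
  -- coboundedness for the frequently-lemma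
  have hcb : IsCoboundedUnder (· ≤ ·) atTop (fun n => dist x (y n)) :=
    Filter.IsBoundedUnder.isCoboundedUnder_le
      ⟨0, Filter.eventually_map.mpr (Filter.Eventually.of_forall fun n => dist_nonneg)⟩
  -- choose indices
  have hNk : ∀ k : ℕ, ∃ n : ℕ, L - 1 / ((k : ℝ) + 1) < dist x (y n) ∧
      e n < (1 / ((k : ℝ) + 1)) ^ 2 := by
    intro k
    have hpos : (0 : ℝ) < 1 / ((k : ℝ) + 1) := by positivity
    have hfreq : ∃ᶠ n in atTop, L - 1 / ((k : ℝ) + 1) < dist x (y n) :=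
      Filter.frequently_lt_of_lt_limsup hcb (by rw [hL] at *; linarith)
    have hev : ∀ᶠ n in atTop, e n < (1 / ((k : ℝ) + 1)) ^ 2 :=
      heto.eventually_lt_const (by positivity)
    exact (hfreq.and_eventually hev).exists
  choose N hN1 hN2 using hNk
  set δ : ℕ → ℝ := fun k => 1 / ((k : ℝ) + 1) with hδ
  have hδpos : ∀ k, 0 < δ k := fun k => by positivity
  have hδ1 : ∀ k, δ k ≤ 1 := by
    intro k
    rw [hδ]
    rw [div_le_one (by positivity)]
    simp
  have hδto : Tendsto δ atTop (𝓝 0) := tendsto_one_div_add_atTop_nhds_zero_nat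
  set D : ℕ → ℝ := fun k => dist x (y (N k)) with hD
  -- eventual smallness of δ
  have hsmall : ∀ᶠ k in atTop, δ k < L / 3 := hδto.eventually_lt_const (by linarith)
  -- construction of the points z k
  set P : ℕ → Prop := fun k => ∃ z : X, dist x z = δ k ∧
    dist z (y (N k)) ≤ D k - δ k + (δ k) ^ 2 with hPdef
  have hP : ∀ᶠ k in atTop, P k := by
    filter_upwards [hsmall] with k hk
    have h1 : δ k ≤ D k := by
      have := hN1 k
      simp only [hD]
      nlinarith [hδpos k]
    obtain ⟨z, hz1, hz2⟩ := my_exists_point hX x (y (N k)) (hδpos k).le h1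
      (show (0:ℝ) < (δ k) ^ 2 by positivity)
    exact ⟨z, hz1, hz2⟩
  have hzex : ∃ z : ℕ → X, ∀ k, P k → dist x (z k) = δ k ∧
      dist (z k) (y (N k)) ≤ D k - δ k + (δ k) ^ 2 := by
    refine ⟨fun k => if h : P k then h.choose else x, fun k h => ?_⟩
    simp only [dif_pos h]
    exact h.choose_spec
  obtain ⟨z, hzspec⟩ := hzex
  have hzprop : ∀ᶠ k in atTop, dist x (z k) = δ k ∧
      dist (z k) (y (N k)) ≤ D k - δ k + (δ k) ^ 2 := hP.mono hzspec
  -- z tends to x within {x}ᶜ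
  have hzt : Tendsto z atTop (𝓝[≠] x) := by
    rw [tendsto_nhdsWithin_iff]
    constructor
    · rw [tendsto_iff_dist_tendsto_zero]
      apply hδto.congr'
      filter_upwards [hzprop] with k hk
      rw [← hk.1, dist_comm]
    · filter_upwards [hzprop] with k hk
      simp only [Set.mem_compl_iff, Set.mem_singleton_iff]
      intro hzx
      rw [hzx, dist_self] at hk
      exact absurd hk.1.symm (hδpos k).ne'
  -- the comparison sequence
  set s : ℕ → ℝ := fun k => (1 - δ k) * (2 * (L - δ k) - δ k) / (2 * t) - δ k with hs
  have hsto : Tendsto s atTop (𝓝 (L / t)) := by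
    have hcont : Tendsto (fun d : ℝ => (1 - d) * (2 * (L - d) - d) / (2 * t) - d)
        (𝓝 0) (𝓝 ((1 - 0) * (2 * (L - 0) - 0) / (2 * t) - 0)) := by
      apply Filter.Tendsto.sub _ tendsto_id
      apply Filter.Tendsto.div_const
      exact (tendsto_const_nhds.sub tendsto_id).mul
        (((tendsto_const_nhds.sub tendsto_id).const_mul 2).sub tendsto_id)
    have hval : (1 - (0:ℝ)) * (2 * (L - 0) - 0) / (2 * t) - 0 = L / t := by
      field_simp
      ring
    rw [hval] at hcont
    exact hcont.comp hδto
  -- the key eventual inequality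
  set g1 : X → ℝ≥0∞ := fun w =>
    ENNReal.ofReal ((ft f t x - ft f t w) / dist x w) with hg1
  set g2 : X → ℝ≥0∞ := fun w => ENNReal.ofReal ((-f (x, w)) / dist x w) with hg2
  have hkey : ∀ᶠ k in atTop, ENNReal.ofReal (s k) ≤ g1 (z k) + g2 (z k) := by
    filter_upwards [hzprop, hsmall] with k hk hsm
    obtain ⟨hdz, hdzy⟩ := hk
    have hδk := hδpos k
    have hδk1 := hδ1 k
    have hDlow : L - δ k < D k := hN1 k
    have hek : e (N k) < (δ k) ^ 2 := hN2 k
    have hek0 : 0 ≤ e (N k) := he0 (N k)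
    -- h1 : value at z k
    have h1 : ft f t (z k) ≤ f (z k, y (N k)) + dist (z k) (y (N k)) ^ 2 / (2 * t) :=
      hle (z k) (y (N k))
    have h2 : f (x, z k) + f (z k, y (N k)) ≤ f (x, y (N k)) := hrev x (z k) (y (N k))
    have hq0 : (0:ℝ) ≤ D k - δ k + (δ k) ^ 2 := le_trans dist_nonneg hdzy
    have h3 : dist (z k) (y (N k)) ^ 2 ≤ (D k - δ k + (δ k) ^ 2) ^ 2 :=
      pow_le_pow_left₀ dist_nonneg hdzy 2
    have h3' : dist (z k) (y (N k)) ^ 2 / (2 * t) ≤ (D k - δ k + (δ k) ^ 2) ^ 2 / (2 * t) := by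
      gcongr
    have h4 : ft f t x = f (x, y (N k)) + (D k) ^ 2 / (2 * t) - e (N k) := by
      simp only [he, FH, hD]
      ring
    have hA : ((D k) ^ 2) / (2 * t) - ((D k - δ k + (δ k) ^ 2) ^ 2) / (2 * t) - e (N k) ≤
        ft f t x - ft f t (z k) - f (x, z k) := by
      linarith
    -- divide by δ k
    have hA2 : (((D k) ^ 2) / (2 * t) - ((D k - δ k + (δ k) ^ 2) ^ 2) / (2 * t) - e (N k)) / δ k
        ≤ (ft f t x - ft f t (z k)) / δ k + (-f (x, z k)) / δ k := by
      rw [← add_div]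
      have : (ft f t x - ft f t (z k)) + -f (x, z k)
          = ft f t x - ft f t (z k) - f (x, z k) := by ring
      rw [this]
      exact div_le_div_of_nonneg_right hA (hδpos k).le |>.trans_eq rfl
    -- lower bound the left-hand side by s k
    have halg : ((D k) ^ 2) / (2 * t) - ((D k - δ k + (δ k) ^ 2) ^ 2) / (2 * t)
        = δ k * ((1 - δ k) * (2 * D k - δ k + (δ k) ^ 2)) / (2 * t) := by
      ring
    have hdiv : (((D k) ^ 2) / (2 * t) - ((D k - δ k + (δ k) ^ 2) ^ 2) / (2 * t) - e (N k)) / δ k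
        = (1 - δ k) * (2 * D k - δ k + (δ k) ^ 2) / (2 * t) - e (N k) / δ k := by
      rw [halg]
      field_simp
    have heδ : e (N k) / δ k ≤ δ k := by
      rw [div_le_iff₀ (hδpos k)]
      nlinarith
    have hmono : (1 - δ k) * (2 * (L - δ k) - δ k) ≤ (1 - δ k) * (2 * D k - δ k + (δ k) ^ 2) := by
      nlinarith [sq_nonneg (δ k)]
    have hmono' : (1 - δ k) * (2 * (L - δ k) - δ k) / (2 * t)
        ≤ (1 - δ k) * (2 * D k - δ k + (δ k) ^ 2) / (2 * t) :=
      div_le_div_of_nonneg_right hmono (by positivity) |>.trans_eq rfl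
    have hsk : s k ≤ (ft f t x - ft f t (z k)) / δ k + (-f (x, z k)) / δ k := by
      rw [hs]
      have := hdiv ▸ hA2
      linarith
    calc ENNReal.ofReal (s k)
        ≤ ENNReal.ofReal ((ft f t x - ft f t (z k)) / δ k + (-f (x, z k)) / δ k) :=
          ENNReal.ofReal_le_ofReal hsk
      _ ≤ ENNReal.ofReal ((ft f t x - ft f t (z k)) / δ k)
          + ENNReal.ofReal ((-f (x, z k)) / δ k) := ENNReal.ofReal_add_le
      _ = g1 (z k) + g2 (z k) := by rw [hg1, hg2, ← hdz]
  -- assemble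
  have hofto : Tendsto (fun k => ENNReal.ofReal (s k)) atTop (𝓝 (ENNReal.ofReal (L / t))) :=
    (ENNReal.continuous_ofReal.tendsto _).comp hsto
  calc ENNReal.ofReal (L / t)
      = Filter.limsup (fun k => ENNReal.ofReal (s k)) atTop := hofto.limsup_eq.symm
    _ ≤ Filter.limsup (fun k => g1 (z k) + g2 (z k)) atTop :=
        Filter.limsup_le_limsup hkey
    _ ≤ Filter.limsup (fun k => g1 (z k)) atTop + Filter.limsup (fun k => g2 (z k)) atTop :=
        my_limsup_add_le _ _
    _ ≤ Filter.limsup g1 (𝓝[≠] x) + Filter.limsup g2 (𝓝[≠] x) :=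
        add_le_add (my_limsup_comp_le hzt) (my_limsup_comp_le hzt)
    _ = descSlope (fun z => ft f t z) x + tilt f x := rfl

end Aux

/-- For every `t > 0` and every `x ∈ X` one has `D⁺_t(x)/t ≤ |∂⁻ f_t|(x) + tilt(f)(x)`. -/
theorem statement3 [CompleteSpace X] (hX : IsLengthSpace X)
    (f : X × X → ℝ) (hlsc : LowerSemicontinuous f)
    (hbdd : ∃ C : ℝ, ∀ p : X × X, C ≤ f p)
    (hrev : ∀ x y z : X, f (x, y) + f (y, z) ≤ f (x, z))
    (t : ℝ) (ht : 0 < t) (x : X) :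
    ENNReal.ofReal (Dplus f t x / t) ≤ descSlope (fun z => ft f t z) x + tilt f x := by
  set S := descSlope (fun z => ft f t z) x + tilt f x with hS
  rcases eq_or_ne S ⊤ with hStop | hStop
  · rw [hStop]; exact le_top
  set M := S.toReal with hM
  have hM0 : 0 ≤ M := ENNReal.toReal_nonneg
  have hSM : S = ENNReal.ofReal M := (ENNReal.ofReal_toReal hStop).symm
  set A := { L : ℝ | ∃ y : ℕ → X, MinSeq f t x y ∧
    Filter.limsup (fun n => dist x (y n)) atTop = L } with hA
  -- every element of A is ≤ t * M
  have hAL : ∀ L ∈ A, L ≤ t * M := by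
    rintro L ⟨y, hy, hLy⟩
    have := my_key hX f hbdd hrev t ht x y hy hLy
    rw [← hS, hSM] at this
    rcases le_or_gt L 0 with h0 | h0
    · nlinarith
    · have hLt : L / t ≤ M := by
        by_contra hcon
        push_neg at hcon
        have := (ENNReal.ofReal_le_ofReal_iff hM0).mp this
        linarith
      rw [div_le_iff₀ ht] at hLt
      linarith [hLt]
  -- A is nonempty
  have hAne : A.Nonempty := by
    obtain ⟨C, hC⟩ := hbdd
    have hne : (Set.range (fun z : X => FH f t x z)).Nonempty := ⟨_, ⟨x, rfl⟩⟩
    have hbb : BddBelow (Set.range (fun z : X => FH f t x z)) := by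
      refine ⟨C, ?_⟩
      rintro _ ⟨z, rfl⟩
      exact le_trans (hC (x, z)) (le_add_of_nonneg_right (by positivity))
    obtain ⟨u, _, hu, hmem⟩ := exists_seq_tendsto_sInf hne hbb
    choose w hw using hmem
    have hms : MinSeq f t x w := by
      have hfteq : ft f t x = sInf (Set.range (fun z : X => FH f t x z)) := by
        rw [ft, if_neg ht.ne']
        rfl
      rw [MinSeq, hfteq]
      exact hu.congr fun n => (hw n).symm
    exact ⟨_, w, hms, rfl⟩
  have hsup : Dplus f t x ≤ t * M := csSup_le hAne hAL
  have : Dplus f t x / t ≤ M := by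
    rw [div_le_iff₀ ht]
    linarith
  calc ENNReal.ofReal (Dplus f t x / t) ≤ ENNReal.ofReal M := ENNReal.ofReal_le_ofReal this
    _ = S := hSM.symm
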